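/- Let S be a complex polynomial of degree n ≥ 1 with S(0) ≠ 0, let k ≥ 4 be an integer, and let ω = e^{2πi/k}. Then there exists a universal constant C > 0 and τ ∈ ℂ with τ^{k²n} = 1 such that (1/k) Σ_{j=1}^k log|S(τω^j)| ≥ log|S(0)| − C/k². -/

import Mathlib

open Polynomial Real

/-- For any polynomial S of degree n ≥ 1 with S(0) ≠ 0, any integer k ≥ 4 and
ω = e^{2πi/k}, there is τ with τ^{k²n} = 1 such that
(1/k) Σ_{j=1}^k log|S(τω^j)| ≥ log|S(0)| − C/k² for a universal constant C. -/
theorem hole_prob_stmt_9 :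
    ∃ C > (0 : ℝ), ∀ (S : Polynomial ℂ) (n : ℕ), S.natDegree = n → 1 ≤ n →
      S.eval 0 ≠ 0 → ∀ (k : ℕ), 4 ≤ k →
      ∃ τ : ℂ, τ ^ (k ^ 2 * n) = 1 ∧
        (1 / (k : ℝ)) * ∑ j ∈ Finset.Icc 1 k,
            Real.log ‖S.eval (τ * Complex.exp (2 * π * Complex.I / k) ^ j)‖
          ≥ Real.log ‖S.eval 0‖ - C / (k : ℝ) ^ 2 := by
  refine ⟨1, one_pos, ?_⟩
  intro S n hdeg hn hS0 k hk
  have hkpos : 0 < k := by omega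
  set ω : ℂ := Complex.exp (2 * π * Complex.I / k) with hω
  set M : ℕ := k ^ 2 * n with hM
  have hMpos : 0 < M := by positivity
  set ζ : ℂ := Complex.exp (2 * π * Complex.I / M) with hζdef
  have hζ : IsPrimitiveRoot ζ M := by
    exact Complex.isPrimitiveRoot_exp M hMpos.ne'
  have hζM : ζ ^ M = 1 := hζ.pow_eq_one
  set Q : Polynomial ℂ := ∏ j ∈ Finset.Icc 1 k, S.comp (C (ω ^ j) * X) with hQdef
  have hQeval : ∀ z : ℂ, Q.eval z = ∏ j ∈ Finset.Icc 1 k, S.eval (z * ω ^ j) := by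
    intro z
    simp only [hQdef, eval_prod, eval_comp, eval_mul, eval_C, eval_X]
    exact Finset.prod_congr rfl fun j _ => by rw [mul_comm]
  have hQ0 : Q.eval 0 = S.eval 0 ^ k := by
    rw [hQeval]
    simp [Nat.card_Icc]
  have hQdeg : Q.natDegree < M := by
    have h1 : Q.natDegree ≤ k * n := by
      calc Q.natDegree ≤ ∑ j ∈ Finset.Icc 1 k, (S.comp (C (ω ^ j) * X)).natDegree :=
            natDegree_prod_le _ _
        _ ≤ ∑ j ∈ Finset.Icc 1 k, n := by
            refine Finset.sum_le_sum fun j _ => ?_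
            calc (S.comp (C (ω ^ j) * X)).natDegree
                ≤ S.natDegree * (C (ω ^ j) * X).natDegree := natDegree_comp_le
              _ ≤ n * 1 := by
                  refine Nat.mul_le_mul (le_of_eq hdeg) ?_
                  calc (C (ω ^ j) * X).natDegree ≤ (C (ω ^ j)).natDegree + (X : ℂ[X]).natDegree :=
                        natDegree_mul_le
                    _ ≤ 1 := by simp
              _ = n := mul_one n
        _ = k * n := by simp [Nat.card_Icc, mul_comm]
    have h2 : k * n < M := by
      rw [hM]
      nlinarith
    omega
  -- key sum identity
  have key : ∑ a ∈ Finset.range M, Q.eval (ζ ^ a) = (M : ℂ) * S.eval 0 ^ k := by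
    have hlt : Q.natDegree < Q.natDegree + 1 := Nat.lt_succ_self _
    calc ∑ a ∈ Finset.range M, Q.eval (ζ ^ a)
        = ∑ a ∈ Finset.range M, ∑ i ∈ Finset.range (Q.natDegree + 1),
            Q.coeff i * (ζ ^ a) ^ i := by
          exact Finset.sum_congr rfl fun a _ => eval_eq_sum_range' hlt _
      _ = ∑ i ∈ Finset.range (Q.natDegree + 1), Q.coeff i * ∑ a ∈ Finset.range M, (ζ ^ i) ^ a := by
          rw [Finset.sum_comm]
          refine Finset.sum_congr rfl fun i _ => ?_
          rw [Finset.mul_sum]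
          refine Finset.sum_congr rfl fun a _ => ?_
          rw [← pow_mul, ← pow_mul, mul_comm i a]
      _ = ∑ i ∈ Finset.range (Q.natDegree + 1), Q.coeff i * (if i = 0 then (M : ℂ) else 0) := by
          refine Finset.sum_congr rfl fun i hi => ?_
          congr 1
          rcases Nat.eq_zero_or_pos i with h0 | hpos
          · simp [h0]
          · rw [if_neg hpos.ne']
            have hilt : i < M := lt_of_le_of_lt (Nat.lt_succ_iff.mp (Finset.mem_range.mp hi)) hQdeg
            have hne1 : ζ ^ i ≠ 1 := hζ.pow_ne_one_of_pos_of_lt hpos.ne' hilt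
            rw [geom_sum_eq hne1, ← pow_mul, mul_comm i M, pow_mul, hζM, one_pow, sub_self,
              zero_div]
      _ = (M : ℂ) * S.eval 0 ^ k := by
          simp only [mul_ite, mul_zero]
          rw [Finset.sum_ite_eq' (Finset.range (Q.natDegree + 1)) 0 (fun i => Q.coeff i * M)]
          simp [coeff_zero_eq_eval_zero, hQ0, mul_comm]
  -- extract a good τ
  have hbig : ∃ a ∈ Finset.range M, ‖S.eval 0‖ ^ k ≤ ‖Q.eval (ζ ^ a)‖ := by
    apply Finset.exists_le_of_sum_le ⟨0, Finset.mem_range.mpr hMpos⟩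
    calc ∑ _a ∈ Finset.range M, ‖S.eval 0‖ ^ k = (M : ℝ) * ‖S.eval 0‖ ^ k := by
          simp [mul_comm]
      _ = ‖(M : ℂ) * S.eval 0 ^ k‖ := by
          simp [norm_mul, norm_pow]
      _ = ‖∑ a ∈ Finset.range M, Q.eval (ζ ^ a)‖ := by rw [key]
      _ ≤ ∑ a ∈ Finset.range M, ‖Q.eval (ζ ^ a)‖ := norm_sum_le _ _
  obtain ⟨a, -, ha⟩ := hbig
  refine ⟨ζ ^ a, ?_, ?_⟩
  · rw [← pow_mul, mul_comm a M, pow_mul, hζM, one_pow]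
  · have hpos0 : (0 : ℝ) < ‖S.eval 0‖ ^ k := pow_pos (norm_pos_iff.mpr hS0) k
    have hQne : Q.eval (ζ ^ a) ≠ 0 := by
      intro h
      rw [h, norm_zero] at ha
      linarith
    have hfacne : ∀ j ∈ Finset.Icc 1 k, S.eval (ζ ^ a * ω ^ j) ≠ 0 := by
      intro j hj
      rw [hQeval] at hQne
      exact fun h => hQne (Finset.prod_eq_zero hj h)
    have hlog : ∑ j ∈ Finset.Icc 1 k, Real.log ‖S.eval (ζ ^ a * ω ^ j)‖
        = Real.log ‖Q.eval (ζ ^ a)‖ := by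
      rw [hQeval, norm_prod, Real.log_prod]
      intro j hj
      simpa using hfacne j hj
    have hlogge : Real.log ‖Q.eval (ζ ^ a)‖ ≥ (k : ℝ) * Real.log ‖S.eval 0‖ := by
      calc Real.log ‖Q.eval (ζ ^ a)‖ ≥ Real.log (‖S.eval 0‖ ^ k) :=
            Real.log_le_log hpos0 ha
        _ = (k : ℝ) * Real.log ‖S.eval 0‖ := by rw [Real.log_pow]
    have hkR : (0 : ℝ) < (k : ℝ) := by exact_mod_cast hkpos
    have : (1 / (k : ℝ)) * ∑ j ∈ Finset.Icc 1 k, Real.log ‖S.eval (ζ ^ a * ω ^ j)‖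
        ≥ Real.log ‖S.eval 0‖ := by
      rw [hlog]
      rw [ge_iff_le, ← div_le_iff₀' (by positivity)]
      calc Real.log ‖S.eval 0‖ / (1 / (k : ℝ)) = (k : ℝ) * Real.log ‖S.eval 0‖ := by
            field_simp
        _ ≤ Real.log ‖Q.eval (ζ ^ a)‖ := hlogge
    have hC : (0 : ℝ) < 1 / (k : ℝ) ^ 2 := by positivity
    linarith
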